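/- Define F(c) = 1/(1 - e^{-cA}) - 1/(cA) for c ≠ 0, A > 0 fixed. Then F is strictly increasing on (0, ∞). -/

import Mathlib

open Real

lemma key_ineq (x : ℝ) (hx : 0 < x) :
    x ^ 2 * Real.exp (-x) < (1 - Real.exp (-x)) ^ 2 := by
  have h2 : 0 < x / 2 := by linarith
  have hs : x / 2 < Real.sinh (x / 2) := Real.self_lt_sinh_iff.mpr h2
  rw [Real.sinh_eq] at hs
  have he : Real.exp (-(x/2)) * Real.exp (x/2) = 1 := by
    rw [← Real.exp_add]; ring_nf; exact Real.exp_zero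
  have hx2 : Real.exp (-x) = Real.exp (-(x/2)) ^ 2 := by
    rw [← Real.exp_nat_mul]; ring_nf
  have hp : 0 < Real.exp (-(x/2)) := Real.exp_pos _
  have hid : (1 - Real.exp (-x)) ^ 2
      = Real.exp (-x) * (Real.exp (x/2) - Real.exp (-(x/2))) ^ 2 := by
    rw [hx2]
    linear_combination (2 * Real.exp (-(x/2)) ^ 2 - 1
      - Real.exp (-(x/2)) * Real.exp (x/2)) * he
  have ha : 0 < Real.exp (-x) := Real.exp_pos _
  have hss : x ^ 2 < (Real.exp (x/2) - Real.exp (-(x/2))) ^ 2 := by nlinarith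
  nlinarith [mul_lt_mul_of_pos_left hss ha]

/-- F(c) = 1/(1 - e^{-cA}) - 1/(cA) is strictly increasing
on (0, ∞), for fixed A > 0. -/
theorem F_strictMonoOn (A : ℝ) (hA : 0 < A) :
    StrictMonoOn (fun c : ℝ => 1/(1 - Real.exp (-(c*A))) - 1/(c*A))
      (Set.Ioi 0) := by
  apply strictMonoOn_of_deriv_pos (convex_Ioi 0)
  · apply ContinuousOn.sub
    · apply ContinuousOn.div continuousOn_const
      · fun_prop
      · intro c hc
        have hc' : 0 < c * A := mul_pos hc hA
        have : Real.exp (-(c*A)) < 1 := Real.exp_lt_one_iff.mpr (by linarith)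
        intro h; linarith [h]
    · apply ContinuousOn.div continuousOn_const (by fun_prop)
      intro c hc
      have hc' : 0 < c * A := mul_pos hc hA
      exact ne_of_gt hc'
  · intro c hc
    rw [interior_Ioi] at hc
    have hc' : 0 < c * A := mul_pos hc hA
    set E := Real.exp (-(c*A)) with hE
    have hE1 : E < 1 := Real.exp_lt_one_iff.mpr (by linarith)
    have hE0 : 0 < E := Real.exp_pos _
    have hu : (1 : ℝ) - E ≠ 0 := by linarith
    have h0 : HasDerivAt (fun c : ℝ => -(c*A)) (-A) c := by
      simpa [Pi.neg_def] using ((hasDerivAt_id c).mul_const A).neg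
    have h1 : HasDerivAt (fun c : ℝ => Real.exp (-(c*A)))
        (Real.exp (-(c*A)) * (-A)) c := h0.exp
    have h2 : HasDerivAt (fun c : ℝ => 1 - Real.exp (-(c*A)))
        (-(Real.exp (-(c*A)) * (-A))) c := h1.const_sub 1
    have h3 : HasDerivAt (fun c : ℝ => (1 - Real.exp (-(c*A)))⁻¹)
        (-(-(Real.exp (-(c*A)) * (-A))) / (1 - Real.exp (-(c*A))) ^ 2) c :=
      h2.inv hu
    have h4 : HasDerivAt (fun c : ℝ => c * A) A c := by
      simpa using (hasDerivAt_id c).mul_const A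
    have h5 : HasDerivAt (fun c : ℝ => (c * A)⁻¹) (-A / (c*A) ^ 2) c :=
      h4.inv (ne_of_gt hc')
    have h6 : HasDerivAt (fun c : ℝ => 1/(1 - Real.exp (-(c*A))) - 1/(c*A))
        (-(-(Real.exp (-(c*A)) * (-A))) / (1 - Real.exp (-(c*A))) ^ 2
          - -A / (c*A) ^ 2) c := by
      simpa [one_div, Pi.sub_def] using h3.sub h5
    rw [h6.deriv]
    rw [← hE]
    have hkey := key_ineq (c*A) hc'
    rw [← hE] at hkey
    have hp : 0 < (1 - E) ^ 2 := by positivity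
    have hq : 0 < (c*A) ^ 2 := by positivity
    have hlt : A * E / (1 - E) ^ 2 < A / (c*A) ^ 2 := by
      rw [div_lt_div_iff₀ hp hq]
      nlinarith
    have e1 : -(-(E * (-A))) / (1 - E) ^ 2 = -(A * E / (1 - E) ^ 2) := by ring
    have e2 : -A / (c*A) ^ 2 = -(A / (c*A) ^ 2) := by ring
    rw [e1, e2]
    linarith
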